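/- arXiv:1510.07027 — 5 statements merged into one kernel-verified Lean document; each statement's English description precedes it below -/
import Mathlib

section
/- For every α > 0 and every 0 < β < α/2, the inverse parametrized double-exponential map ψ_SDE⁻¹(·; α) is analytic on the strip S_β = {z ∈ ℂ : |Im z| < β}. -/
noncomputable section

open Complex Real Set Filter

/-- The open strip of half-width `β` in the complex plane. -/
def stripS (β : ℝ) : Set ℂ := {z : ℂ | |z.im| < β}

/-- The set whose supremum is `M_ψ(β; f)`. -/
def MpsiSet (ψinv f : ℂ → ℂ) (β : ℝ) : Set ℝ :=
  (fun z => ‖f (ψinv z)‖) '' stripS β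

/-- `M_ψ(β; f) = sup_{z ∈ S_β} |f(ψ⁻¹(z))|`. -/
def Mpsi (ψinv f : ℂ → ℂ) (β : ℝ) : ℝ := sSup (MpsiSet ψinv f β)

/-- The set whose supremum is `N_ψ(β, L; f)` (with Hölder exponent `τ`). -/
def NpsiSet (ψinv f : ℂ → ℂ) (β L τ : ℝ) : Set ℝ :=
  {t | ∃ z : ℂ,
    (‖z - (L : ℂ)‖ ≤ β ∧
      t = ‖f (ψinv z) - f 1‖ / ‖1 - ψinv z‖ ^ τ) ∨
    (‖z + (L : ℂ)‖ ≤ β ∧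
      t = ‖f (ψinv z) - f 0‖ / ‖ψinv z‖ ^ τ)}

/-- `N_ψ(β, L; f)`. -/
def Npsi (ψinv f : ℂ → ℂ) (β L τ : ℝ) : ℝ := sSup (NpsiSet ψinv f β L τ)

/-- `C_ψ(β, L) = sup_{|s + L| ≤ β} |ψ⁻¹(s)|`. -/
def Cpsi (ψinv : ℂ → ℂ) (β L : ℝ) : ℝ :=
  sSup ((fun s => ‖ψinv s‖) '' {s : ℂ | ‖s + (L : ℂ)‖ ≤ β})

/-- The weights `γ_k` of the discrete cosine transform. -/
def gamCoef (n k : ℕ) : ℝ := if k = 0 ∨ k = n then 1/2 else 1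

/-- The discrete cosine coefficients `c̃_k`. -/
def ctilde (FL : ℝ → ℂ) (n k : ℕ) : ℂ :=
  ((2 * gamCoef n k / n : ℝ) : ℂ) *
    ∑ j ∈ Finset.range (n + 1),
      ((gamCoef n j : ℝ) : ℂ) * FL (-1 + 2 * (j : ℝ) / n) *
        ((Real.cos ((j : ℝ) * k * π / n) : ℝ) : ℂ)

/-- The cosine-expansion approximation `P_{n,L}` of `F_L` on `[-1,1]`. -/
def PnL (FL : ℝ → ℂ) (n : ℕ) (y : ℝ) : ℂ :=
  ∑ k ∈ Finset.range (n + 1),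
    ctilde FL n k * ((Real.cos ((k : ℝ) * π * (y + 1) / 2) : ℝ) : ℂ)

/-- The approximation `p_{n,L}` on `[0,1]`. -/
def papprox (f : ℂ → ℂ) (ψ : ℝ → ℝ) (ψinv : ℂ → ℂ) (n : ℕ) (L : ℝ) (x : ℝ) : ℂ :=
  let FL : ℝ → ℂ := fun y => f (ψinv ((L * y : ℝ) : ℂ))
  let xL : ℝ := (ψinv ((-L : ℝ) : ℂ)).re
  if x < xL then FL (-1)
  else if x ≤ 1 - xL then PnL FL n (ψ x / L)
  else FL 1

/-- The uniform norm on `[0,1]`. -/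
def supNorm01 (g : ℝ → ℂ) : ℝ := sSup ((fun x => ‖g x‖) '' Icc (0 : ℝ) 1)

/-- The exponential map `ψ_E`. -/
def psiE (x : ℝ) : ℝ := Real.log (x / (1 - x))

/-- The inverse exponential map `ψ_E⁻¹`, extended to the complex plane. -/
def psiEinv (s : ℂ) : ℂ := 1 / (1 + Complex.exp (-s))

/-- The parametrized exponential map `ψ_SE(·; α)`. -/
def psiSE (α x : ℝ) : ℝ :=
  (α / π) * Real.log ((Real.exp (π * x / α) - 1) / (1 - Real.exp (π * (x - 1) / α)))

/-- The inverse parametrized exponential map `ψ_SE⁻¹(·; α)`. -/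
def psiSEinv (α : ℝ) (s : ℂ) : ℂ :=
  ((α / π : ℝ) : ℂ) *
    Complex.log ((1 + Complex.exp ((π : ℂ) * (s + 1 / 2) / (α : ℂ))) /
      (1 + Complex.exp ((π : ℂ) * (s - 1 / 2) / (α : ℂ))))

/-- The double-exponential map `ψ_DE`. -/
def psiDE (x : ℝ) : ℝ := Real.arsinh ((1 / π) * Real.log (x / (1 - x)))

/-- The inverse double-exponential map `ψ_DE⁻¹`, extended to the complex plane. -/
def psiDEinv (s : ℂ) : ℂ := 1 / (1 + Complex.exp (-(π : ℂ) * Complex.sinh s))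

/-- The inverse parametrized double-exponential map `ψ_SDE⁻¹(·; α)`. -/
def psiSDEinv (α : ℝ) (s : ℂ) : ℂ :=
  ((α / π : ℝ) : ℂ) *
    Complex.log (
      (1 + Complex.exp ((π : ℂ) * (s + 1 / 2) / (α : ℂ) +
        Complex.sinh ((π : ℂ) * s / (α : ℂ)) / Complex.cosh ((π : ℂ) / (2 * (α : ℂ))))) /
      (1 + Complex.exp ((π : ℂ) * (s - 1 / 2) / (α : ℂ) +
        Complex.sinh ((π : ℂ) * s / (α : ℂ)) / Complex.cosh ((π : ℂ) / (2 * (α : ℂ))))))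

/-- The parametrized double-exponential map `ψ_SDE(·; α)`, the inverse of `ψ_SDE⁻¹` on ℝ. -/
def psiSDE (α : ℝ) : ℝ → ℝ := Function.invFun (fun s : ℝ => (psiSDEinv α ((s : ℝ) : ℂ)).re)

/-- The principal branch of the Lambert-W function (for nonnegative arguments). -/
def lambertW (x : ℝ) : ℝ := sSup {w : ℝ | w * Real.exp w ≤ x}

/-- The oscillatory test function `f(x) = exp(-2πiωx)`. -/
def fosc (ω : ℝ) : ℂ → ℂ := fun z => Complex.exp (-2 * (π : ℂ) * Complex.I * (ω : ℂ) * z)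

/-- The two-slit strip `Ŝ_α = S_α \ ((-∞,0] ∪ [1,∞))`. -/
def twoSlitStrip (α : ℝ) : Set ℂ :=
  stripS α \ ({z : ℂ | z.im = 0 ∧ z.re ≤ 0} ∪ {z : ℂ | z.im = 0 ∧ 1 ≤ z.re})

/-- The function `H` governing the interior error for `ψ_E`. -/
def Hfun (t : ℝ) : ℝ :=
  if 1 < t then t * Real.arccos (1 / Real.sqrt t) - Real.sqrt (t - 1) else 0

/-- The parameter `α = L₀π/(π/2 + W(cn))` for the map `ψ_SDE`. -/
def alphaSDE (L₀ c : ℝ) (n : ℕ) : ℝ := L₀ * π / (π / 2 + lambertW (c * n))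
lemma my_sinh_re (z : ℂ) : (Complex.sinh z).re = Real.sinh z.re * Real.cos z.im := by
  have h : Complex.sinh z = (Complex.exp z - Complex.exp (-z)) / 2 := rfl
  have h2 : ((Complex.exp z - Complex.exp (-z)) / 2).re
      = ((Complex.exp z - Complex.exp (-z)).re) / 2 := by
    rw [show (2:ℂ) = ((2:ℝ):ℂ) by norm_num, Complex.div_ofReal_re]
  rw [h, h2, Complex.sub_re, Complex.exp_re, Complex.exp_re, Real.sinh_eq]
  simp [Complex.neg_re, Complex.neg_im, Real.cos_neg]
  ring

lemma my_sinh_im (z : ℂ) : (Complex.sinh z).im = Real.cosh z.re * Real.sin z.im := by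
  have h : Complex.sinh z = (Complex.exp z - Complex.exp (-z)) / 2 := rfl
  have h2 : ((Complex.exp z - Complex.exp (-z)) / 2).im
      = ((Complex.exp z - Complex.exp (-z)).im) / 2 := by
    rw [show (2:ℂ) = ((2:ℝ):ℂ) by norm_num, Complex.div_ofReal_im]
  rw [h, h2, Complex.sub_im, Complex.exp_im, Complex.exp_im, Real.cosh_eq]
  simp [Complex.neg_re, Complex.neg_im, Real.sin_neg]
  ring

lemma my_key (d X θ : ℝ) (hd : 0 < d) (hθ : |θ| < π/2)
    (him : π ≤ |θ + Real.cosh X * Real.sin θ / Real.cosh d|) :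
    d < |X + Real.sinh X * Real.cos θ / Real.cosh d| := by
  have hc : 0 < Real.cosh d := Real.cosh_pos _
  have hcX : 0 < Real.cosh X := Real.cosh_pos _
  have habs : |θ + Real.cosh X * Real.sin θ / Real.cosh d|
      ≤ |θ| + Real.cosh X * |Real.sin θ| / Real.cosh d := by
    calc |θ + Real.cosh X * Real.sin θ / Real.cosh d|
        ≤ |θ| + |Real.cosh X * Real.sin θ / Real.cosh d| := abs_add_le _ _
      _ = |θ| + Real.cosh X * |Real.sin θ| / Real.cosh d := by
          rw [abs_div, abs_mul, abs_of_pos hcX, abs_of_pos hc]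
  have hsin1 : |Real.sin θ| ≤ 1 := Real.abs_sin_le_one θ
  have hpi : (2:ℝ) < π := by linarith [Real.pi_gt_three]
  -- cosh d < cosh X
  have h2 : (π - |θ|) * Real.cosh d ≤ Real.cosh X * |Real.sin θ| := by
    have := le_trans him habs
    have h3 : π - |θ| ≤ Real.cosh X * |Real.sin θ| / Real.cosh d := by linarith
    calc (π - |θ|) * Real.cosh d
        ≤ (Real.cosh X * |Real.sin θ| / Real.cosh d) * Real.cosh d := by
          exact mul_le_mul_of_nonneg_right h3 hc.le
      _ = Real.cosh X * |Real.sin θ| := by field_simp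
  have h4 : Real.cosh d < Real.cosh X := by
    nlinarith [abs_nonneg θ, hθ, hsin1, hcX.le, hc]
  have h5 : d < |X| := by
    have := Real.cosh_lt_cosh.mp h4
    rwa [abs_of_pos hd] at this
  have hcos : 0 ≤ Real.cos θ := by
    rcases abs_lt.mp hθ with ⟨h1, h2⟩
    exact Real.cos_nonneg_of_mem_Icc ⟨by linarith, h2.le⟩
  rcases le_or_gt 0 X with hX | hX
  · have ht : 0 ≤ Real.sinh X * Real.cos θ / Real.cosh d :=
      div_nonneg (mul_nonneg (Real.sinh_nonneg_iff.mpr hX) hcos) hc.le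
    have : X ≤ X + Real.sinh X * Real.cos θ / Real.cosh d := by linarith
    calc d < |X| := h5
      _ = X := abs_of_nonneg hX
      _ ≤ X + Real.sinh X * Real.cos θ / Real.cosh d := this
      _ ≤ |X + Real.sinh X * Real.cos θ / Real.cosh d| := le_abs_self _
  · have hsX : Real.sinh X ≤ 0 := by
      have := Real.sinh_le_sinh.mpr hX.le
      simpa using this
    have ht : Real.sinh X * Real.cos θ / Real.cosh d ≤ 0 :=
      div_nonpos_of_nonpos_of_nonneg (mul_nonpos_of_nonpos_of_nonneg hsX hcos) hc.le
    have : X + Real.sinh X * Real.cos θ / Real.cosh d ≤ X := by linarith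
    calc d < |X| := h5
      _ = -X := abs_of_neg hX
      _ ≤ -(X + Real.sinh X * Real.cos θ / Real.cosh d) := by linarith
      _ ≤ |X + Real.sinh X * Real.cos θ / Real.cosh d| := neg_le_abs _

lemma my_bad (α β : ℝ) (hα : 0 < α) (hβ0 : 0 < β) (hβ : β < α/2) (s : ℂ) (hs : |s.im| < β)
    (r : ℝ)
    (hr : Complex.exp (((π:ℂ) * s / (α:ℂ) - ((π/(2*α) : ℝ) : ℂ)) +
        Complex.sinh ((π:ℂ) * s / (α:ℂ)) / ((Real.cosh (π/(2*α)) : ℝ) : ℂ)) = (r : ℂ))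
    (hr0 : r < 0) (hr1 : Real.exp (-(π/α)) ≤ |r|) (hr2 : |r| ≤ 1) : False := by
  set z : ℂ := (π:ℂ) * s / (α:ℂ) with hz
  set d : ℝ := π/(2*α) with hdd
  set c : ℝ := Real.cosh d with hcc
  set B : ℂ := (z - (d:ℂ)) + Complex.sinh z / (c:ℂ) with hB
  have hd : 0 < d := div_pos Real.pi_pos (by linarith)
  have hzre : z.re = π * s.re / α := by
    rw [hz, Complex.div_ofReal_re, Complex.re_ofReal_mul]
  have hzim : z.im = π * s.im / α := by
    rw [hz, Complex.div_ofReal_im, Complex.im_ofReal_mul]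
  have hBre : B.re = (z.re - d) + Real.sinh z.re * Real.cos z.im / c := by
    rw [hB, Complex.add_re, Complex.sub_re, Complex.ofReal_re]
    congr 1
    rw [Complex.div_ofReal_re, my_sinh_re]
  have hBim : B.im = z.im + Real.cosh z.re * Real.sin z.im / c := by
    rw [hB, Complex.add_im, Complex.sub_im, Complex.ofReal_im, sub_zero]
    congr 1
    rw [Complex.div_ofReal_im, my_sinh_im]
  have habs : Real.exp B.re = |r| := by
    have h := congrArg norm hr
    rwa [Complex.norm_exp, Complex.norm_real, Real.norm_eq_abs] at h
  have hBre_le : B.re ≤ 0 := Real.exp_le_one_iff.mp (by rw [habs]; exact hr2)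
  have hBre_ge : -(π/α) ≤ B.re := Real.exp_le_exp.mp (by rw [habs]; exact hr1)
  have hsin : Real.sin B.im = 0 := by
    have h := congrArg Complex.im hr
    rw [Complex.exp_im, Complex.ofReal_im] at h
    have := Real.exp_pos B.re
    exact by nlinarith [mul_self_nonneg (Real.sin B.im)]
  have hcos : Real.cos B.im < 0 := by
    have h := congrArg Complex.re hr
    rw [Complex.exp_re, Complex.ofReal_re] at h
    have he := Real.exp_pos B.re
    nlinarith
  have hpi : π ≤ |B.im| := by
    by_contra h
    push_neg at h
    rcases abs_lt.mp h with ⟨h1, h2⟩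
    have h0 : B.im = 0 := (Real.sin_eq_zero_iff_of_lt_of_lt h1 h2).mp hsin
    rw [h0, Real.cos_zero] at hcos
    linarith
  have hθ : |z.im| < π/2 := by
    rw [hzim, abs_div, abs_mul, abs_of_pos Real.pi_pos, abs_of_pos hα]
    rw [div_lt_iff₀ hα]
    calc π * |s.im| < π * β := by
          exact mul_lt_mul_of_pos_left hs Real.pi_pos
      _ ≤ π/2 * α := by nlinarith [Real.pi_pos]
  have hkey := my_key d z.re z.im hd hθ (by rw [← hBim]; exact hpi)
  have : |z.re + Real.sinh z.re * Real.cos z.im / Real.cosh d| ≤ d := by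
    rw [← hcc]
    have heq : z.re + Real.sinh z.re * Real.cos z.im / c = B.re + d := by
      rw [hBre]; ring
    rw [heq, abs_le]
    constructor
    · have : π/α = 2*d := by rw [hdd]; field_simp
      linarith [hBre_ge, this ▸ hBre_ge]
    · linarith
  rw [← hcc] at hkey
  linarith [hkey, this]

lemma my_expr_minus (α : ℝ) (hα : 0 < α) (s : ℂ) :
    (π:ℂ) * (s - 1/2) / (α:ℂ) +
      Complex.sinh ((π:ℂ) * s / (α:ℂ)) / Complex.cosh ((π:ℂ) / (2 * (α:ℂ)))
    = ((π:ℂ) * s / (α:ℂ) - ((π/(2*α) : ℝ) : ℂ)) +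
      Complex.sinh ((π:ℂ) * s / (α:ℂ)) / ((Real.cosh (π/(2*α)) : ℝ) : ℂ) := by
  have hα' : (α:ℂ) ≠ 0 := Complex.ofReal_ne_zero.mpr hα.ne'
  have hc : ((π:ℂ)/(2*(α:ℂ))) = ((π/(2*α) : ℝ) : ℂ) := by push_cast; ring
  rw [hc, ← Complex.ofReal_cosh]
  congr 1
  push_cast
  field_simp

lemma my_expr_plus (α : ℝ) (hα : 0 < α) (s : ℂ) :
    (π:ℂ) * (s + 1/2) / (α:ℂ) +
      Complex.sinh ((π:ℂ) * s / (α:ℂ)) / Complex.cosh ((π:ℂ) / (2 * (α:ℂ)))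
    = ((π:ℂ) * (s - 1/2) / (α:ℂ) +
        Complex.sinh ((π:ℂ) * s / (α:ℂ)) / Complex.cosh ((π:ℂ) / (2 * (α:ℂ))))
      + ((π/α : ℝ) : ℂ) := by
  have hα' : (α:ℂ) ≠ 0 := Complex.ofReal_ne_zero.mpr hα.ne'
  have : (π:ℂ) * (s + 1/2) / (α:ℂ) = (π:ℂ) * (s - 1/2) / (α:ℂ) + ((π/α : ℝ) : ℂ) := by
    push_cast
    field_simp
    ring
  rw [this]
  ring

lemma my_analyticAt_csinh (z : ℂ) : AnalyticAt ℂ Complex.sinh z := by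
  have h : Complex.sinh = fun w : ℂ => (Complex.exp w - Complex.exp (-w)) / 2 := rfl
  rw [h]
  exact (analyticAt_cexp.sub (analyticAt_cexp.comp (analyticAt_id.neg))).div
    analyticAt_const two_ne_zero

/-- analyticity of `ψ_SDE⁻¹` on strips (Lemma B.1). -/
theorem psiSDEinv_analyticOn
    (α β : ℝ) (hα : 0 < α) (hβ0 : 0 < β) (hβ : β < α / 2) :
    AnalyticOnNhd ℂ (psiSDEinv α) (stripS β) := by
  intro s hs
  have hs' : |s.im| < β := hs
  have hα' : (α:ℂ) ≠ 0 := Complex.ofReal_ne_zero.mpr hα.ne'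
  have hpa : 0 < π/α := div_pos Real.pi_pos hα
  -- denominator is nonzero
  have hden : (1 : ℂ) + Complex.exp ((π : ℂ) * (s - 1 / 2) / (α : ℂ) +
      Complex.sinh ((π : ℂ) * s / (α : ℂ)) / Complex.cosh ((π : ℂ) / (2 * (α : ℂ)))) ≠ 0 := by
    intro h
    have hexp : Complex.exp ((π : ℂ) * (s - 1 / 2) / (α : ℂ) +
        Complex.sinh ((π : ℂ) * s / (α : ℂ)) / Complex.cosh ((π : ℂ) / (2 * (α : ℂ))))
        = (((-1 : ℝ)) : ℂ) := by
      push_cast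
      linear_combination h
    rw [my_expr_minus α hα s] at hexp
    have h1 : Real.exp (-(π/α)) ≤ 1 := Real.exp_le_one_iff.mpr (by linarith)
    exact my_bad α β hα hβ0 hβ s hs' (-1) hexp (by norm_num)
      (by simpa using h1) (by norm_num)
  -- the quotient lies in the slit plane
  have hslit : (1 + Complex.exp ((π : ℂ) * (s + 1 / 2) / (α : ℂ) +
        Complex.sinh ((π : ℂ) * s / (α : ℂ)) / Complex.cosh ((π : ℂ) / (2 * (α : ℂ))))) /
      (1 + Complex.exp ((π : ℂ) * (s - 1 / 2) / (α : ℂ) +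
        Complex.sinh ((π : ℂ) * s / (α : ℂ)) / Complex.cosh ((π : ℂ) / (2 * (α : ℂ)))))
      ∈ Complex.slitPlane := by
    by_contra hns
    rw [Complex.mem_slitPlane_iff] at hns
    push_neg at hns
    set Q : ℂ := (1 + Complex.exp ((π : ℂ) * (s + 1 / 2) / (α : ℂ) +
        Complex.sinh ((π : ℂ) * s / (α : ℂ)) / Complex.cosh ((π : ℂ) / (2 * (α : ℂ))))) /
      (1 + Complex.exp ((π : ℂ) * (s - 1 / 2) / (α : ℂ) +
        Complex.sinh ((π : ℂ) * s / (α : ℂ)) / Complex.cosh ((π : ℂ) / (2 * (α : ℂ)))))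
      with hQdef
    set t : ℝ := Q.re with htdef
    have ht : t ≤ 0 := hns.1
    have hQ : Q = (t : ℂ) := Complex.ext (by simp [htdef]) (by simp [hns.2])
    have hmul : (t : ℂ) * (1 + Complex.exp ((π : ℂ) * (s - 1 / 2) / (α : ℂ) +
        Complex.sinh ((π : ℂ) * s / (α : ℂ)) / Complex.cosh ((π : ℂ) / (2 * (α : ℂ)))))
        = 1 + Complex.exp ((π : ℂ) * (s + 1 / 2) / (α : ℂ) +
        Complex.sinh ((π : ℂ) * s / (α : ℂ)) / Complex.cosh ((π : ℂ) / (2 * (α : ℂ)))) := by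
      rw [← hQ, hQdef, div_mul_cancel₀ _ hden]
    set E : ℝ := Real.exp (π/α) with hEdef
    have hE1 : (1:ℝ) < E := by
      have := Real.add_one_le_exp (π/α)
      linarith
    have hEt : (0:ℝ) < E - t := by linarith
    have hAB : Complex.exp ((π : ℂ) * (s + 1 / 2) / (α : ℂ) +
        Complex.sinh ((π : ℂ) * s / (α : ℂ)) / Complex.cosh ((π : ℂ) / (2 * (α : ℂ))))
        = (E : ℂ) * Complex.exp ((π : ℂ) * (s - 1 / 2) / (α : ℂ) +
        Complex.sinh ((π : ℂ) * s / (α : ℂ)) / Complex.cosh ((π : ℂ) / (2 * (α : ℂ)))) := by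
      rw [my_expr_plus α hα s, Complex.exp_add, Complex.ofReal_exp]
      ring
    set u : ℂ := Complex.exp ((π : ℂ) * (s - 1 / 2) / (α : ℂ) +
        Complex.sinh ((π : ℂ) * s / (α : ℂ)) / Complex.cosh ((π : ℂ) / (2 * (α : ℂ)))) with hudef
    rw [hAB] at hmul
    -- solve for u
    set r : ℝ := (t - 1)/(E - t) with hrdef
    have hu : u = (r : ℂ) := by
      have hEtne : ((E : ℂ) - (t : ℂ)) ≠ 0 := by
        rw [← Complex.ofReal_sub]
        exact Complex.ofReal_ne_zero.mpr hEt.ne'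
      have h2 : u * ((E:ℂ) - (t:ℂ)) = (t:ℂ) - 1 := by linear_combination -hmul
      rw [hrdef]
      push_cast
      field_simp at h2 ⊢
      linear_combination h2
    have hr0 : r < 0 := div_neg_of_neg_of_pos (by linarith) hEt
    have habsr : |r| = (1 - t)/(E - t) := by
      rw [abs_of_neg hr0, hrdef, ← neg_div]
      congr 1
      ring
    have hr1 : Real.exp (-(π/α)) ≤ |r| := by
      rw [habsr, le_div_iff₀ hEt]
      have hprod : Real.exp (-(π/α)) * E = 1 := by
        rw [hEdef, ← Real.exp_add]
        simp
      have hle1 : Real.exp (-(π/α)) ≤ 1 := Real.exp_le_one_iff.mpr (by linarith)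
      nlinarith [Real.exp_pos (-(π/α))]
    have hr2 : |r| ≤ 1 := by
      rw [habsr, div_le_one hEt]
      linarith
    have hexp : Complex.exp (((π:ℂ) * s / (α:ℂ) - ((π/(2*α) : ℝ) : ℂ)) +
        Complex.sinh ((π:ℂ) * s / (α:ℂ)) / ((Real.cosh (π/(2*α)) : ℝ) : ℂ)) = (r : ℂ) := by
      rw [← my_expr_minus α hα s]
      exact hu
    exact my_bad α β hα hβ0 hβ s hs' r hexp hr0 hr1 hr2
  -- assemble analyticity
  have hcosh : Complex.cosh ((π : ℂ) / (2 * (α : ℂ))) ≠ 0 := by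
    have hc : ((π:ℂ)/(2*(α:ℂ))) = ((π/(2*α) : ℝ) : ℂ) := by push_cast; ring
    rw [hc, ← Complex.ofReal_cosh]
    exact Complex.ofReal_ne_zero.mpr (Real.cosh_pos _).ne'
  have hz : AnalyticAt ℂ (fun z : ℂ => (π:ℂ) * z / (α:ℂ)) s :=
    (analyticAt_const.mul analyticAt_id).div analyticAt_const hα'
  have hsinh : AnalyticAt ℂ (fun z : ℂ =>
      Complex.sinh ((π:ℂ) * z / (α:ℂ)) / Complex.cosh ((π : ℂ) / (2 * (α : ℂ)))) s :=
    ((my_analyticAt_csinh _).comp hz).div analyticAt_const hcosh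
  have hnum : AnalyticAt ℂ (fun z : ℂ => 1 + Complex.exp ((π : ℂ) * (z + 1 / 2) / (α : ℂ) +
      Complex.sinh ((π : ℂ) * z / (α : ℂ)) / Complex.cosh ((π : ℂ) / (2 * (α : ℂ))))) s :=
    analyticAt_const.add
      ((((analyticAt_const.mul (analyticAt_id.add analyticAt_const)).div analyticAt_const hα').add
        hsinh).cexp)
  have hdena : AnalyticAt ℂ (fun z : ℂ => 1 + Complex.exp ((π : ℂ) * (z - 1 / 2) / (α : ℂ) +
      Complex.sinh ((π : ℂ) * z / (α : ℂ)) / Complex.cosh ((π : ℂ) / (2 * (α : ℂ))))) s :=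
    analyticAt_const.add
      ((((analyticAt_const.mul (analyticAt_id.sub analyticAt_const)).div analyticAt_const hα').add
        hsinh).cexp)
  unfold psiSDEinv
  exact analyticAt_const.mul ((( hnum.div hdena hden).clog hslit))
end
end

section
/- For 0 < σ < 1/2 define G(y, σ) = sin(σπ + e^y sin(σπ)) / ( exp(y + e^y cos(σπ)) + cos(σπ + e^y sin(σπ)) ). Then for every 0 < σ < 1/2, sup_{y ≥ 0} |G(y, σ)| ≤ tan(σπ). -/
noncomputable section

open Complex Real Set Filter

/-- the technical bound on `G(y, σ)` (Lemma B.3). -/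
theorem Gfun_bound
    (σ : ℝ) (hσ0 : 0 < σ) (hσ : σ < 1 / 2) :
    ∀ y : ℝ, 0 ≤ y →
      |Real.sin (σ * π + Real.exp y * Real.sin (σ * π)) /
          (Real.exp (y + Real.exp y * Real.cos (σ * π)) +
            Real.cos (σ * π + Real.exp y * Real.sin (σ * π)))| ≤ Real.tan (σ * π) := by
  intro y hy
  have hπ := Real.pi_pos
  set θ := σ * π with hθdef
  have hθ0 : 0 < θ := by positivity
  have hθlt : θ < π / 2 := by rw [hθdef]; nlinarith
  have hc : 0 < Real.cos θ := Real.cos_pos_of_mem_Ioo ⟨by linarith, hθlt⟩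
  have hs : 0 < Real.sin θ := Real.sin_pos_of_pos_of_lt_pi hθ0 (by linarith)
  set t := Real.exp y with htdef
  have ht1 : 1 ≤ t := Real.one_le_exp hy
  set A := θ + t * Real.sin θ with hAdef
  have hE : Real.exp (y + t * Real.cos θ) = t * Real.exp (t * Real.cos θ) := by
    rw [Real.exp_add]
  have hexp1 : 1 < Real.exp (t * Real.cos θ) := by
    rw [show (1:ℝ) = Real.exp 0 from Real.exp_zero.symm]
    exact Real.exp_lt_exp.mpr (by positivity)
  have hcosA := Real.neg_one_le_cos A
  have hden : 0 < Real.exp (y + t * Real.cos θ) + Real.cos A := by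
    rw [hE]; nlinarith
  have key : Real.cos θ * |Real.sin A| - Real.sin θ * Real.cos A
      ≤ Real.sin θ * (t * Real.exp (t * Real.cos θ)) := by
    rcases le_or_gt 0 (Real.sin A) with h | h
    · rw [_root_.abs_of_nonneg h]
      have h2 : Real.cos θ * Real.sin A - Real.sin θ * Real.cos A
          = Real.sin (t * Real.sin θ) := by
        rw [show t * Real.sin θ = A - θ by rw [hAdef]; ring, Real.sin_sub]; ring
      rw [h2]
      have h1 : Real.sin (t * Real.sin θ) ≤ t * Real.sin θ := Real.sin_le (by positivity)
      nlinarith [mul_pos (mul_pos hs (lt_of_lt_of_le one_pos ht1)) (sub_pos.mpr hexp1)]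
    · have hA0 : 0 ≤ A := by positivity
      have hApi : π < A := by
        by_contra h'
        push_neg at h'
        exact absurd (Real.sin_nonneg_of_nonneg_of_le_pi hA0 h') (not_le.2 h)
      have hts : 1 < t * Real.sin θ := by
        have : π - θ < t * Real.sin θ := by rw [hAdef] at hApi; linarith
        nlinarith [Real.pi_gt_three]
      rw [_root_.abs_of_neg h]
      have h2 : Real.cos θ * (-Real.sin A) - Real.sin θ * Real.cos A
          = -Real.sin (A + θ) := by linear_combination Real.sin_add A θ
      rw [h2]
      nlinarith [Real.neg_one_le_sin (A + θ)]
  rw [_root_.abs_div, _root_.abs_of_pos hden, div_le_iff₀ hden, Real.tan_eq_sin_div_cos,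
    div_mul_eq_mul_div, le_div_iff₀ hc]
  nlinarith [key, hE]
end
end

section
/- For every real A with 0 ≤ A < 1 and every real y with |y| ≤ 1, the principal complex logarithm satisfies |Log(1 + A e^{iπy})| ≤ √2 · |log(1 − A)|. -/
noncomputable section

open Complex Real Set Filter

/-- bound on the principal logarithm of `1 + A e^{iπy}`. -/
theorem clog_one_add_bound
    (A y : ℝ) (hA0 : 0 ≤ A) (hA1 : A < 1) (hy : |y| ≤ 1) :
    ‖Complex.log (1 + (A : ℂ) * Complex.exp ((π : ℂ) * Complex.I * (y : ℂ)))‖ ≤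
      Real.sqrt 2 * |Real.log (1 - A)| := by
  set w : ℂ := (A : ℂ) * Complex.exp ((π : ℂ) * Complex.I * (y : ℂ)) with hw
  have harg : (π : ℂ) * Complex.I * (y : ℂ) = ((π * y : ℝ) : ℂ) * Complex.I := by
    push_cast; ring
  have hwA : ‖w‖ = A := by
    rw [hw, harg, norm_mul, Complex.norm_exp_ofReal_mul_I]
    simp [_root_.abs_of_nonneg hA0]
  have hw1 : ‖w‖ < 1 := by rw [hwA]; exact hA1
  have hA1' : 0 < 1 - A := by linarith
  have hsum := Complex.hasSum_taylorSeries_log (z := w) hw1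
  have hAlt : ‖(A : ℂ)‖ < 1 := by simpa [Real.norm_eq_abs, _root_.abs_of_nonneg hA0] using hA1
  have hsumA := Complex.hasSum_taylorSeries_neg_log (z := (A : ℂ)) hAlt
  have hre : HasSum (fun n : ℕ ↦ A ^ n / n) (-Real.log (1 - A)) := by
    have h1 : ∀ n : ℕ, ((A : ℂ) ^ n / (n : ℂ)) = ((A ^ n / n : ℝ) : ℂ) := by
      intro n; push_cast; ring
    have h2 : -Complex.log (1 - (A : ℂ)) = ((-Real.log (1 - A) : ℝ) : ℂ) := by
      have : (1 - (A : ℂ)) = ((1 - A : ℝ) : ℂ) := by push_cast; ring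
      rw [this, ← Complex.ofReal_log hA1'.le]; push_cast; ring
    rw [← Complex.hasSum_ofReal]
    have h3 := funext h1 ▸ hsumA
    rw [h2] at h3
    exact_mod_cast h3
  have hterm : ∀ n : ℕ, ‖(-1 : ℂ) ^ (n + 1) * w ^ n / (n : ℂ)‖ = A ^ n / n := by
    intro n
    simp [norm_div, norm_mul, norm_pow, hwA]
  have hsummable : Summable (fun n : ℕ ↦ ‖(-1 : ℂ) ^ (n + 1) * w ^ n / (n : ℂ)‖) := by
    simp only [hterm]
    exact hre.summable
  have hle : ‖Complex.log (1 + w)‖ ≤ -Real.log (1 - A) := by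
    rw [← hsum.tsum_eq, ← hre.tsum_eq]
    calc ‖∑' n : ℕ, (-1 : ℂ) ^ (n + 1) * w ^ n / (n : ℂ)‖
        ≤ ∑' n : ℕ, ‖(-1 : ℂ) ^ (n + 1) * w ^ n / (n : ℂ)‖ := norm_tsum_le_tsum_norm hsummable
      _ = ∑' n : ℕ, A ^ n / n := by exact tsum_congr hterm
  have habs : |Real.log (1 - A)| = -Real.log (1 - A) := by
    rw [abs_of_nonpos]
    exact Real.log_nonpos hA1'.le (by linarith)
  have h2 : (1 : ℝ) ≤ Real.sqrt 2 := by
    rw [show (1:ℝ) = Real.sqrt 1 by simp]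
    exact Real.sqrt_le_sqrt (by norm_num)
  calc ‖Complex.log (1 + w)‖ = ‖Complex.log (1 + w)‖ := rfl
    _ ≤ -Real.log (1 - A) := hle
    _ = 1 * |Real.log (1 - A)| := by rw [habs]; ring
    _ ≤ Real.sqrt 2 * |Real.log (1 - A)| := by
        apply mul_le_mul_of_nonneg_right h2 (abs_nonneg _)
end
end

section
/- Let ψ_E⁻¹(z) = 1/(1 + e^{−z}) be the inverse exponential map, let 0 < β < π and ω > 0. Then sup_{z ∈ S_β} |exp(−2πiω ψ_E⁻¹(z))| = exp(πω tan(β/2)); in particular, sup_{x ∈ ℝ} sin(β)/(e^x + 2cos(β) + e^{−x}) = tan(β/2)/2. -/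
noncomputable section

open Complex Real Set Filter

lemma two_le_exp_add (x : ℝ) : 2 ≤ Real.exp x + Real.exp (-x) := by
  have := Real.one_le_cosh x
  rw [Real.cosh_eq] at this; linarith

lemma denomPos (x y : ℝ) (h : -1 < Real.cos y) :
    0 < Real.exp x + 2 * Real.cos y + Real.exp (-x) := by
  have := two_le_exp_add x; linarith

lemma negone_lt_cos (β : ℝ) (hβπ : β < π) (hβ0 : -π < β) : -1 < Real.cos β := by
  have hc : 0 < Real.cos (β/2) := Real.cos_pos_of_mem_Ioo ⟨by linarith, by linarith⟩
  have h := Real.cos_sq (β/2)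
  rw [show 2*(β/2)=β by ring] at h
  nlinarith

lemma tanHalf (y : ℝ) (hy : |y| < π) :
    Real.sin y / (2 + 2 * Real.cos y) = Real.tan (y/2) / 2 := by
  have hy1 := abs_lt.mp hy
  have hc : 0 < Real.cos (y/2) := by
    apply Real.cos_pos_of_mem_Ioo
    constructor
    · nlinarith [hy1.1]
    · nlinarith [hy1.2]
  have hs : Real.sin y = 2 * Real.sin (y/2) * Real.cos (y/2) := by
    rw [← Real.sin_two_mul]; ring_nf
  have hcc : Real.cos y = 2 * Real.cos (y/2)^2 - 1 := by
    have := Real.cos_sq (y/2)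
    have h2 : 2 * (y/2) = y := by ring
    rw [h2] at this; linarith
  have hd : (0:ℝ) < 2 + 2 * Real.cos y := by nlinarith
  rw [div_eq_div_iff hd.ne' (by norm_num : (2:ℝ) ≠ 0), Real.tan_eq_sin_div_cos, hs, hcc]
  field_simp
  ring

lemma im_psiEinv (x y : ℝ) (h : -1 < Real.cos y) :
    (psiEinv (x + y * Complex.I)).im
      = Real.sin y / (Real.exp x + 2 * Real.cos y + Real.exp (-x)) := by
  have hD : 0 < Real.exp x + 2 * Real.cos y + Real.exp (-x) := denomPos x y h
  have hre : (-(x + y * Complex.I)).re = -x := by simp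
  have him : (-(x + y * Complex.I)).im = -y := by simp
  have hexre : (Complex.exp (-(x + y * Complex.I))).re = Real.exp (-x) * Real.cos y := by
    rw [Complex.exp_re, hre, him, Real.cos_neg]
  have hexim : (Complex.exp (-(x + y * Complex.I))).im = -(Real.exp (-x) * Real.sin y) := by
    rw [Complex.exp_im, hre, him, Real.sin_neg]; ring
  rw [psiEinv, one_div, Complex.inv_im]
  rw [Complex.normSq_apply]
  simp only [Complex.add_re, Complex.add_im, Complex.one_re, Complex.one_im, hexre, hexim]
  have hN : (1 + Real.exp (-x) * Real.cos y) * (1 + Real.exp (-x) * Real.cos y)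
      + (0 + -(Real.exp (-x) * Real.sin y)) * (0 + -(Real.exp (-x) * Real.sin y))
      = Real.exp (-x) * (Real.exp x + 2 * Real.cos y + Real.exp (-x)) := by
    have hpyth : Real.sin y ^ 2 + Real.cos y ^ 2 = 1 := Real.sin_sq_add_cos_sq y
    have hee : Real.exp (-x) * Real.exp x = 1 := by
      rw [← Real.exp_add]; simp
    linear_combination (Real.exp (-x))^2 * hpyth - hee
  rw [hN]
  rw [div_eq_div_iff (by positivity) hD.ne']
  ring

lemma abs_fosc (ω : ℝ) (w : ℂ) :
    ‖Complex.exp (-2 * (π : ℂ) * Complex.I * (ω : ℂ) * w)‖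
      = Real.exp (2 * π * ω * w.im) := by
  rw [Complex.norm_exp]
  congr 1
  simp [Complex.mul_re, Complex.mul_im]

lemma bound2 (β : ℝ) (hβ0 : 0 < β) (hβπ : β < π) (x y : ℝ) (hy : |y| ≤ β) :
    Real.sin y / (Real.exp x + 2 * Real.cos y + Real.exp (-x))
      ≤ Real.tan (β/2) / 2 := by
  have hpi := Real.pi_pos
  have hcosβ : -1 < Real.cos β := negone_lt_cos β hβπ (by linarith)
  have hcos : Real.cos β ≤ Real.cos y := by
    rw [← Real.cos_abs y]
    exact Real.cos_le_cos_of_nonneg_of_le_pi (abs_nonneg y) hβπ.le hy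
  have hcosy : -1 < Real.cos y := lt_of_lt_of_le hcosβ hcos
  have hD : 0 < Real.exp x + 2 * Real.cos y + Real.exp (-x) := denomPos x y hcosy
  have htanβ : 0 < Real.tan (β/2) :=
    Real.tan_pos_of_pos_of_lt_pi_div_two (by linarith) (by linarith)
  rcases le_or_gt (Real.sin y) 0 with hsy | hsy
  · calc Real.sin y / _ ≤ 0 := div_nonpos_of_nonpos_of_nonneg hsy hD.le
    _ ≤ Real.tan (β/2)/2 := by linarith
  · have hy0 : 0 < y := by
      by_contra hle
      push_neg at hle
      have : Real.sin y ≤ 0 :=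
        Real.sin_nonpos_of_nonpos_of_neg_pi_le hle (by cases abs_le.mp hy; linarith)
      linarith
    have hyβ : y ≤ β := (abs_le.mp hy).2
    have h1 : Real.sin y / (Real.exp x + 2 * Real.cos y + Real.exp (-x))
        ≤ Real.sin y / (2 + 2 * Real.cos y) := by
      apply div_le_div_of_nonneg_left hsy.le (by linarith)
      have := two_le_exp_add x; linarith
    have h2 : Real.sin y / (2 + 2 * Real.cos y) = Real.tan (y/2) / 2 :=
      tanHalf y (by rw [abs_of_pos hy0]; linarith)
    have h3 : Real.tan (y/2) ≤ Real.tan (β/2) := by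
      rcases lt_or_eq_of_le hyβ with h | h
      · exact (Real.tan_lt_tan_of_lt_of_lt_pi_div_two (by linarith) (by linarith)
          (by linarith)).le
      · rw [h]
    calc Real.sin y / (Real.exp x + 2 * Real.cos y + Real.exp (-x))
        ≤ Real.sin y / (2 + 2 * Real.cos y) := h1
      _ = Real.tan (y/2) / 2 := h2
      _ ≤ Real.tan (β/2) / 2 := by linarith


/-- the supremum of `|exp(−2πiω ψ_E⁻¹(z))|` over the strip `S_β`. -/
theorem psiEinv_strip_sup
    (β ω : ℝ) (hβ0 : 0 < β) (hβπ : β < π) (hω : 0 < ω) :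
    sSup ((fun z => ‖Complex.exp (-2 * (π : ℂ) * Complex.I * (ω : ℂ) *
          psiEinv z)‖) '' stripS β) = Real.exp (π * ω * Real.tan (β / 2)) ∧
      sSup (Set.range fun x : ℝ =>
          Real.sin β / (Real.exp x + 2 * Real.cos β + Real.exp (-x))) =
        Real.tan (β / 2) / 2 := by
  have hpi := Real.pi_pos
  have hcosβ : -1 < Real.cos β := negone_lt_cos β hβπ (by linarith)
  have htanβ : 0 < Real.tan (β/2) :=
    Real.tan_pos_of_pos_of_lt_pi_div_two (by linarith) (by linarith)
  have htanhalfβ : Real.sin β / (2 + 2 * Real.cos β) = Real.tan (β/2) / 2 :=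
    tanHalf β (by rw [abs_of_pos hβ0]; exact hβπ)
  constructor
  · apply csSup_eq_of_forall_le_of_forall_lt_exists_gt
    · exact ⟨_, ⟨0, by simp [stripS, hβ0], rfl⟩⟩
    · rintro a ⟨z, hz, rfl⟩
      have hz' : |z.im| < β := hz
      rw [show z = (z.re : ℂ) + z.im * Complex.I from (Complex.re_add_im z).symm]
      beta_reduce
      rw [abs_fosc ω, im_psiEinv z.re z.im]
      · rw [Real.exp_le_exp]
        have hb := bound2 β hβ0 hβπ z.re z.im hz'.le
        nlinarith [mul_le_mul_of_nonneg_left hb (show (0:ℝ) ≤ 2*π*ω by positivity)]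
      · have : Real.cos β ≤ Real.cos z.im := by
          rw [← Real.cos_abs z.im]
          exact Real.cos_le_cos_of_nonneg_of_le_pi (abs_nonneg _) hβπ.le hz'.le
        linarith
    · intro w hw
      set φ : ℝ → ℝ := fun y => Real.exp (2*π*ω*(Real.sin y/(2+2*Real.cos y))) with hφ
      have hφβ : φ β = Real.exp (π * ω * Real.tan (β/2)) := by
        rw [hφ]; simp only
        rw [htanhalfβ]; ring_nf
      have hcont : ContinuousAt φ β := by
        apply Real.continuous_exp.continuousAt.comp
        apply ContinuousAt.mul continuousAt_const
        exact ContinuousAt.div Real.continuous_sin.continuousAt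
          (by fun_prop) (by intro h; linarith)
      have hev : ∀ᶠ y in nhds β, w < φ y := by
        apply hcont.eventually_const_lt
        rw [hφβ]; exact hw
      have hev2 : ∀ᶠ y in nhds β, 0 < y := eventually_gt_nhds hβ0
      have hev3 : ∀ᶠ y in nhdsWithin β (Set.Iio β), w < φ y ∧ 0 < y ∧ y < β := by
        filter_upwards [(hev.and hev2).filter_mono nhdsWithin_le_nhds,
          self_mem_nhdsWithin] with y h1 h2
        exact ⟨h1.1, h1.2, h2⟩
      obtain ⟨y, hy1, hy2, hy3⟩ := hev3.exists
      refine ⟨_, ⟨((0:ℝ) : ℂ) + (y:ℝ) * Complex.I, ?_, rfl⟩, ?_⟩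
      · simp [stripS, abs_of_pos hy2, hy3]
      · have hcosy : -1 < Real.cos y := negone_lt_cos y (by linarith) (by linarith)
        beta_reduce
        rw [abs_fosc ω, im_psiEinv 0 y hcosy]
        have : Real.exp (0:ℝ) + 2 * Real.cos y + Real.exp (-(0:ℝ)) = 2 + 2*Real.cos y := by
          rw [neg_zero, Real.exp_zero]; ring
        rw [this]
        exact hy1
  · have hub : ∀ x : ℝ, Real.sin β / (Real.exp x + 2 * Real.cos β + Real.exp (-x))
        ≤ Real.tan (β/2) / 2 := by
      intro x
      exact bound2 β hβ0 hβπ x β (by rw [abs_of_pos hβ0])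
    apply IsGreatest.csSup_eq
    constructor
    · refine ⟨0, ?_⟩
      simp only [Real.exp_zero, neg_zero]
      rw [show (1:ℝ) + 2*Real.cos β + 1 = 2 + 2*Real.cos β by ring]
      exact htanhalfβ
    · rintro a ⟨x, rfl⟩
      exact hub x
end
end

section
/- Let c, ω > 0, set n* = c²ω², and let n ≥ n*. Then the function φ(β) = πω tan(β/2) − √n πβ/(2c), defined for 0 ≤ β < π, has a local minimum at β* = 2 arccos((n*/n)^{1/4}), at which it takes the value φ(β*) = −πω H(√(n/n*)), where H(t) = t arccos(1/√t) − √(t−1) for t ≥ 1; moreover β* ≥ π(1 − (n*/n)^{1/4}). -/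
noncomputable section

open Complex Real Set Filter

set_option maxHeartbeats 1000000

lemma tan_tangent_line {u v : ℝ} (hu : u ∈ Ico 0 (π/2)) (hv : v ∈ Ico 0 (π/2)) :
    Real.tan v + (u - v) / Real.cos v ^ 2 ≤ Real.tan u := by
  have pi2 : 0 < π / 2 := by positivity
  have hcos : ∀ x : ℝ, x ∈ Ico 0 (π/2) → 0 < Real.cos x := fun x hx =>
    Real.cos_pos_of_mem_Ioo ⟨by linarith [hx.1], hx.2⟩
  set g : ℝ → ℝ := fun x => Real.tan x - x / Real.cos v ^ 2 with hg
  have hd : ∀ x : ℝ, x ∈ Ico 0 (π/2) →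
      HasDerivAt g (1 / Real.cos x ^ 2 - 1 / Real.cos v ^ 2) x := by
    intro x hx
    have := (Real.hasDerivAt_tan (hcos x hx).ne').sub
      ((hasDerivAt_id x).div_const (Real.cos v ^ 2))
    exact this
  have key : g v ≤ g u := by
    rcases le_total u v with h | h
    · have mono : AntitoneOn g (Icc u v) := by
        apply antitoneOn_of_deriv_nonpos (convex_Icc u v)
        · intro x hx
          have hx' : x ∈ Ico 0 (π/2) := ⟨le_trans hu.1 hx.1, lt_of_le_of_lt hx.2 hv.2⟩
          exact ((hd x hx').differentiableAt.continuousAt).continuousWithinAt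
        · intro x hx
          rw [interior_Icc] at hx
          have hx' : x ∈ Ico 0 (π/2) := ⟨le_trans hu.1 hx.1.le, lt_trans hx.2 hv.2⟩
          exact (hd x hx').differentiableAt.differentiableWithinAt
        · intro x hx
          rw [interior_Icc] at hx
          have hx' : x ∈ Ico 0 (π/2) := ⟨le_trans hu.1 hx.1.le, lt_trans hx.2 hv.2⟩
          rw [(hd x hx').deriv]
          have h1 : Real.cos v ≤ Real.cos x :=
            Real.cos_le_cos_of_nonneg_of_le_pi hx'.1 (by linarith [hv.2, Real.pi_pos]) hx.2.le
          have h2 := hcos v hv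
          have h3 := hcos x hx'
          have : Real.cos v ^ 2 ≤ Real.cos x ^ 2 := by nlinarith
          rw [sub_nonpos]
          exact one_div_le_one_div_of_le (pow_pos h2 2) this
      exact mono ⟨le_refl u, h⟩ ⟨h, le_refl v⟩ h
    · have mono : MonotoneOn g (Icc v u) := by
        apply monotoneOn_of_deriv_nonneg (convex_Icc v u)
        · intro x hx
          have hx' : x ∈ Ico 0 (π/2) := ⟨le_trans hv.1 hx.1, lt_of_le_of_lt hx.2 hu.2⟩
          exact ((hd x hx').differentiableAt.continuousAt).continuousWithinAt
        · intro x hx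
          rw [interior_Icc] at hx
          have hx' : x ∈ Ico 0 (π/2) := ⟨le_trans hv.1 hx.1.le, lt_trans hx.2 hu.2⟩
          exact (hd x hx').differentiableAt.differentiableWithinAt
        · intro x hx
          rw [interior_Icc] at hx
          have hx' : x ∈ Ico 0 (π/2) := ⟨le_trans hv.1 hx.1.le, lt_trans hx.2 hu.2⟩
          rw [(hd x hx').deriv]
          have h1 : Real.cos x ≤ Real.cos v :=
            Real.cos_le_cos_of_nonneg_of_le_pi hv.1 (by linarith [hx'.2, Real.pi_pos]) hx.1.le
          have h2 := hcos v hv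
          have h3 := hcos x hx'
          have : Real.cos x ^ 2 ≤ Real.cos v ^ 2 := by nlinarith
          rw [sub_nonneg]
          exact one_div_le_one_div_of_le (pow_pos h3 2) this
      exact mono ⟨le_refl v, h⟩ ⟨h, le_refl u⟩ h
  have hv2 : (0:ℝ) < Real.cos v ^ 2 := pow_pos (hcos v hv) 2
  simp only [hg] at key
  have : (u - v) / Real.cos v ^ 2 = u / Real.cos v ^ 2 - v / Real.cos v ^ 2 := by ring
  linarith [key, this.le]

/-- the local minimum of `β ↦ πω tan(β/2) − √n πβ/(2c)` on `[0,π)`. -/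
theorem phi_local_min
    (c ω n : ℝ) (hc : 0 < c) (hω : 0 < ω) (hn : c ^ 2 * ω ^ 2 ≤ n) :
    IsLocalMinOn (fun β => π * ω * Real.tan (β / 2) - Real.sqrt n * π * β / (2 * c))
        (Ico (0 : ℝ) π) (2 * Real.arccos ((c ^ 2 * ω ^ 2 / n) ^ ((1 : ℝ) / 4))) ∧
      π * ω * Real.tan (2 * Real.arccos ((c ^ 2 * ω ^ 2 / n) ^ ((1 : ℝ) / 4)) / 2) -
          Real.sqrt n * π * (2 * Real.arccos ((c ^ 2 * ω ^ 2 / n) ^ ((1 : ℝ) / 4))) / (2 * c) =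
        -(π * ω) * (Real.sqrt (n / (c ^ 2 * ω ^ 2)) *
            Real.arccos (1 / Real.sqrt (Real.sqrt (n / (c ^ 2 * ω ^ 2)))) -
          Real.sqrt (Real.sqrt (n / (c ^ 2 * ω ^ 2)) - 1)) ∧
      π * (1 - (c ^ 2 * ω ^ 2 / n) ^ ((1 : ℝ) / 4)) ≤
        2 * Real.arccos ((c ^ 2 * ω ^ 2 / n) ^ ((1 : ℝ) / 4)) := by
  have hpi := Real.pi_pos
  have hcw : 0 < c ^ 2 * ω ^ 2 := by positivity
  have hn0 : 0 < n := lt_of_lt_of_le hcw hn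
  set q : ℝ := c ^ 2 * ω ^ 2 / n with hq
  have hq0 : 0 < q := by positivity
  have hq1 : q ≤ 1 := by rw [hq, div_le_one hn0]; exact hn
  set A : ℝ := q ^ ((1 : ℝ) / 4) with hA
  have hA0 : 0 < A := Real.rpow_pos_of_pos hq0 _
  have hA1 : A ≤ 1 := Real.rpow_le_one hq0.le hq1 (by norm_num)
  set t : ℝ := Real.sqrt (n / (c ^ 2 * ω ^ 2)) with ht
  have htq : n / (c ^ 2 * ω ^ 2) = q⁻¹ := by rw [hq]; field_simp
  have hAsq : A ^ 2 = q ^ ((1 : ℝ) / 2) := by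
    rw [hA, ← Real.rpow_natCast (q ^ ((1:ℝ)/4)) 2, ← Real.rpow_mul hq0.le]
    norm_num
  have htval : t = (q ^ ((1 : ℝ) / 2))⁻¹ := by
    rw [ht, htq, Real.sqrt_eq_rpow, Real.inv_rpow hq0.le]
  have hAt : A ^ 2 * t = 1 := by
    rw [hAsq, htval, mul_inv_cancel₀ (ne_of_gt (Real.rpow_pos_of_pos hq0 _))]
  have ht0 : 0 < t := by rw [htval]; positivity
  have htA : t = (A ^ 2)⁻¹ := by
    have hA2 : (0:ℝ) < A ^ 2 := by positivity
    field_simp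
    nlinarith [hAt]
  have ht1 : 1 ≤ t := by nlinarith [hAt, ht0, sq_nonneg A, (by nlinarith : A ^ 2 ≤ 1)]
  have h1A : 1 / Real.sqrt t = A := by
    rw [htA, Real.sqrt_inv, Real.sqrt_sq hA0.le]
    field_simp
  have hsqrtn : Real.sqrt n = c * ω * t := by
    have h2 : t ^ 2 = n / (c ^ 2 * ω ^ 2) := Real.sq_sqrt (by positivity)
    have hne : n = (c * ω * t) ^ 2 := by
      field_simp at h2
      nlinarith [h2]
    rw [hne, Real.sqrt_sq (by positivity)]
  set u : ℝ := Real.arccos A with hu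
  have hcosu : Real.cos u = A := Real.cos_arccos (by linarith) hA1
  have hu_mem : u ∈ Ico 0 (π / 2) :=
    ⟨Real.arccos_nonneg A, Real.arccos_lt_pi_div_two.mpr hA0⟩
  have hsec : 1 / Real.cos u ^ 2 = t := by rw [hcosu, htA]; field_simp
  have htanu : Real.tan u = Real.sqrt (t - 1) := by
    rw [Real.tan_eq_sin_div_cos, hcosu, Real.sin_arccos]
    rw [show t - 1 = (1 - A ^ 2) / A ^ 2 by rw [htA]; field_simp,
      Real.sqrt_div (by nlinarith) (A ^ 2), Real.sqrt_sq hA0.le]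
  have h22 : 2 * u / 2 = u := by ring
  have hε : ∀ β : ℝ, Real.sqrt n * π * β / (2 * c) = π * ω * (t * (β / 2)) := by
    intro β; rw [hsqrtn]; field_simp
  refine ⟨?_, ?_, ?_⟩
  · apply IsMinOn.localize
    intro β hβ
    simp only [Set.mem_setOf_eq]
    have hβm : β / 2 ∈ Ico 0 (π / 2) := ⟨by linarith [hβ.1], by linarith [hβ.2]⟩
    have key := tan_tangent_line hβm hu_mem
    rw [div_eq_mul_one_div, hsec] at key
    have hpω : (0:ℝ) < π * ω := by positivity
    rw [hε β, hε (2 * u), h22]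
    nlinarith [mul_le_mul_of_nonneg_left key hpω.le]
  · rw [hε (2 * u), h22, htanu, h1A]
    ring
  · have harc : Real.arccos A = π / 2 - Real.arcsin A := Real.arccos_eq_pi_div_two_sub_arcsin A
    have h1 : 2 / π * Real.arcsin A ≤ Real.sin (Real.arcsin A) :=
      Real.mul_le_sin (Real.arcsin_nonneg.mpr hA0.le) (Real.arcsin_le_pi_div_two A)
    rw [Real.sin_arcsin (by linarith) hA1] at h1
    have h2 : 2 * Real.arcsin A ≤ π * A := by
      have h3 := mul_le_mul_of_nonneg_left h1 hpi.le
      have h4 : π * (2 / π * Real.arcsin A) = 2 * Real.arcsin A := by field_simp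
      linarith
    have h5 : u = π / 2 - Real.arcsin A := hu.trans harc
    linarith
end
end
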